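/- arXiv:math-ph/0510019 — 3 statements merged into one kernel-verified Lean document; each statement's English description precedes it below -/
import Mathlib

section
/- Let σ and σ̂ be two finite positive Borel measures on ℝ with compact support, mutually absolutely continuous with dσ̂ = f dσ where (1+ε)^{-1} ≤ f ≤ 1+ε. Let p_s and p̂_s denote the off-diagonal (recurrence) coefficients of the Jacobi matrices obtained by orthogonalizing polynomials with respect to σ and σ̂. Then |p̂_s − p_s| ≤ ε p_s for all s ≥ 0. -/
open MeasureTheory Polynomial

lemma integrable_poly_eval (μ : Measure ℝ) [IsFiniteMeasure μ] (R : ℝ)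
    (hsupp : μ {x | R < |x|} = 0) (g : Polynomial ℝ) :
    Integrable (fun x => g.eval x) μ := by
  obtain ⟨C, hC⟩ := (isCompact_Icc (a := -R) (b := R)).exists_bound_of_continuousOn
    g.continuousOn
  have h0 : ∀ᵐ x ∂μ, x ∉ {x : ℝ | R < |x|} := measure_eq_zero_iff_ae_notMem.mp hsupp
  refine (integrable_const C).mono' g.continuous.aestronglyMeasurable ?_
  filter_upwards [h0] with x hx
  exact hC x (by simpa [Set.mem_Icc, ← abs_le] using not_lt.mp hx)

lemma orth_lt (μ : Measure ℝ) [IsFiniteMeasure μ] (R : ℝ)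
    (hsupp : μ {x | R < |x|} = 0) (P : ℕ → Polynomial ℝ)
    (hdeg : ∀ k, (P k).natDegree = k) (hlead : ∀ k, 0 < (P k).leadingCoeff)
    (horth : ∀ j k, ∫ x, (P j).eval x * (P k).eval x ∂μ = if j = k then 1 else 0) :
    ∀ n, ∀ s, n < s → ∀ Q : Polynomial ℝ, Q.natDegree ≤ n →
      ∫ x, Q.eval x * (P s).eval x ∂μ = 0 := by
  intro n
  induction n with
  | zero =>
    intro s hs Q hQ
    have hQ' : Q = C (Q.coeff 0) := Q.eq_C_of_natDegree_le_zero hQ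
    have hP0 : P 0 = C ((P 0).coeff 0) := (P 0).eq_C_of_natDegree_le_zero (le_of_eq (hdeg 0))
    have hc : (P 0).coeff 0 ≠ 0 := by
      have h := hlead 0
      rw [leadingCoeff, hdeg 0] at h
      exact ne_of_gt h
    have hfun : (fun x => Q.eval x * (P s).eval x)
        = fun x => (Q.coeff 0 / (P 0).coeff 0) * ((P 0).eval x * (P s).eval x) := by
      funext x
      conv_lhs => rw [hQ']
      conv_rhs => rw [hP0]
      simp [eval_C]
      field_simp
    rw [hfun, integral_const_mul, horth 0 s, if_neg (by omega), mul_zero]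
  | succ n ih =>
    intro s hs Q hQ
    set c := Q.coeff (n+1) / (P (n+1)).leadingCoeff with hc
    set Q' := Q - C c * P (n+1) with hQ'def
    have hL : (P (n+1)).leadingCoeff = (P (n+1)).coeff (n+1) := by
      rw [leadingCoeff, hdeg]
    have hLne : (P (n+1)).leadingCoeff ≠ 0 := ne_of_gt (hlead (n+1))
    have hQ'deg : Q'.natDegree ≤ n := by
      rw [natDegree_le_iff_coeff_eq_zero]
      intro m hm
      rcases eq_or_lt_of_le (Nat.succ_le_of_lt hm) with h | h
      · rw [hQ'def]
        simp only [coeff_sub, coeff_C_mul, ← h, ← hL, hc]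
        field_simp
        simp
      · rw [hQ'def]
        have h1 : Q.coeff m = 0 := coeff_eq_zero_of_natDegree_lt (lt_of_le_of_lt hQ h)
        have h2 : (P (n+1)).coeff m = 0 :=
          coeff_eq_zero_of_natDegree_lt (by rw [hdeg]; exact h)
        simp [coeff_sub, coeff_C_mul, h1, h2]
    have h1 : Integrable (fun x => Q'.eval x * (P s).eval x) μ := by
      simpa [eval_mul] using integrable_poly_eval μ R hsupp (Q' * P s)
    have h2 : Integrable (fun x => c * ((P (n+1)).eval x * (P s).eval x)) μ := by
      simpa [eval_mul] using
        ((integrable_poly_eval μ R hsupp (P (n+1) * P s)).const_mul c)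
    have hsplit : (fun x => Q.eval x * (P s).eval x)
        = fun x => Q'.eval x * (P s).eval x + c * ((P (n+1)).eval x * (P s).eval x) := by
      funext x
      simp [hQ'def, sub_mul]
      ring
    rw [hsplit, integral_add h1 h2, ih s (by omega) Q' hQ'deg, integral_const_mul,
      horth (n+1) s, if_neg (by omega), mul_zero, add_zero]

lemma integral_mul_ortho (μ : Measure ℝ) [IsFiniteMeasure μ] (R : ℝ)
    (hsupp : μ {x | R < |x|} = 0) (P : ℕ → Polynomial ℝ)
    (hdeg : ∀ k, (P k).natDegree = k) (hlead : ∀ k, 0 < (P k).leadingCoeff)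
    (horth : ∀ j k, ∫ x, (P j).eval x * (P k).eval x ∂μ = if j = k then 1 else 0)
    (s : ℕ) (Q : Polynomial ℝ) (hQ : Q.natDegree ≤ s) :
    ∫ x, Q.eval x * (P s).eval x ∂μ = Q.coeff s / (P s).leadingCoeff := by
  set c := Q.coeff s / (P s).leadingCoeff with hc
  set Q' := Q - C c * P s with hQ'def
  have hL : (P s).leadingCoeff = (P s).coeff s := by rw [leadingCoeff, hdeg]
  have hLne : (P s).leadingCoeff ≠ 0 := ne_of_gt (hlead s)
  have hcoeff : Q'.coeff s = 0 := by
    rw [hQ'def]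
    simp only [coeff_sub, coeff_C_mul, ← hL, hc]
    field_simp
    simp
  have hQ'deg : Q'.natDegree ≤ s := by
    rw [natDegree_le_iff_coeff_eq_zero]
    intro m hm
    have h1 : Q.coeff m = 0 := coeff_eq_zero_of_natDegree_lt (lt_of_le_of_lt hQ hm)
    have h2 : (P s).coeff m = 0 := coeff_eq_zero_of_natDegree_lt (by rw [hdeg]; exact hm)
    simp [hQ'def, coeff_sub, coeff_C_mul, h1, h2]
  have hzero : ∫ x, Q'.eval x * (P s).eval x ∂μ = 0 := by
    cases s with
    | zero =>
      have hQ0 : Q' = 0 := by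
        rw [Q'.eq_C_of_natDegree_le_zero hQ'deg, hcoeff]; simp
      simp [hQ0]
    | succ t =>
      have hdeg' : Q'.natDegree ≤ t := by
        rw [natDegree_le_iff_coeff_eq_zero]
        intro m hm
        rcases eq_or_lt_of_le (Nat.succ_le_of_lt hm) with h | h
        · rw [← h]; exact hcoeff
        · exact coeff_eq_zero_of_natDegree_lt (lt_of_le_of_lt hQ'deg h)
      exact orth_lt μ R hsupp P hdeg hlead horth t (t+1) (by omega) Q' hdeg'
  have h1 : Integrable (fun x => Q'.eval x * (P s).eval x) μ := by
    simpa [eval_mul] using integrable_poly_eval μ R hsupp (Q' * P s)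
  have h2 : Integrable (fun x => c * ((P s).eval x * (P s).eval x)) μ := by
    simpa [eval_mul] using ((integrable_poly_eval μ R hsupp (P s * P s)).const_mul c)
  have hsplit : (fun x => Q.eval x * (P s).eval x)
      = fun x => Q'.eval x * (P s).eval x + c * ((P s).eval x * (P s).eval x) := by
    funext x
    simp [hQ'def, sub_mul]
    ring
  rw [hsplit, integral_add h1 h2, hzero, integral_const_mul, horth s s, if_pos rfl,
    mul_one, zero_add]

lemma bessel (μ : Measure ℝ) [IsFiniteMeasure μ] (R : ℝ)
    (hsupp : μ {x | R < |x|} = 0) (P : ℕ → Polynomial ℝ)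
    (hdeg : ∀ k, (P k).natDegree = k) (hlead : ∀ k, 0 < (P k).leadingCoeff)
    (horth : ∀ j k, ∫ x, (P j).eval x * (P k).eval x ∂μ = if j = k then 1 else 0)
    (s : ℕ) (Q : Polynomial ℝ) (hQ : Q.natDegree ≤ s) :
    (Q.coeff s / (P s).leadingCoeff)^2 ≤ ∫ x, (Q.eval x)^2 ∂μ := by
  set c := Q.coeff s / (P s).leadingCoeff with hc
  have hI1 : Integrable (fun x => (Q.eval x)^2) μ := by
    simpa [eval_mul, pow_two] using integrable_poly_eval μ R hsupp (Q*Q)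
  have hI2 : Integrable (fun x => (2*c) * (Q.eval x * (P s).eval x)) μ := by
    simpa [eval_mul] using ((integrable_poly_eval μ R hsupp (Q * P s)).const_mul (2*c))
  have hI3 : Integrable (fun x => c^2 * ((P s).eval x * (P s).eval x)) μ := by
    simpa [eval_mul] using ((integrable_poly_eval μ R hsupp (P s * P s)).const_mul (c^2))
  have hI12 : Integrable (fun x => (Q.eval x)^2 - (2*c) * (Q.eval x * (P s).eval x)) μ :=
    hI1.sub hI2
  have key : 0 ≤ ∫ x, ((Q.eval x)^2 - (2*c) * (Q.eval x * (P s).eval x)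
      + c^2 * ((P s).eval x * (P s).eval x)) ∂μ := by
    refine integral_nonneg fun x => ?_
    show (0:ℝ) ≤ _
    nlinarith [sq_nonneg (Q.eval x - c * (P s).eval x)]
  rw [integral_add hI12 hI3, integral_sub hI1 hI2, integral_const_mul,
    integral_const_mul, integral_mul_ortho μ R hsupp P hdeg hlead horth s Q hQ,
    horth s s, if_pos rfl, ← hc] at key
  nlinarith [key]

lemma jacobi_ratio (ε pa pb La Lb : ℝ) (hε : 0 ≤ ε) (hpa : 0 < pa) (hpb : 0 < pb)
    (hLa : 0 < La) (hLb : 0 < Lb)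
    (h1 : pb^2 * Lb^2 ≤ (1+ε) * (pa^2 * La^2))
    (h2 : pa^2 * La^2 ≤ (1+ε) * (pb^2 * Lb^2))
    (h3 : La^2 ≤ (1+ε) * Lb^2)
    (h4 : Lb^2 ≤ (1+ε) * La^2) :
    |pb - pa| ≤ ε * pa := by
  have hone : (0:ℝ) < 1+ε := by linarith
  have m1 := mul_le_mul_of_nonneg_left h3 (show (0:ℝ) ≤ (1+ε) * pa^2 by positivity)
  have m2 := mul_le_mul_of_nonneg_left h4 (show (0:ℝ) ≤ (1+ε) * pb^2 by positivity)
  have j1 : pb^2 * Lb^2 ≤ ((1+ε)^2 * pa^2) * Lb^2 := by nlinarith [h1, m1]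
  have j2 : pa^2 * La^2 ≤ ((1+ε)^2 * pb^2) * La^2 := by nlinarith [h2, m2]
  have k1' : pb^2 ≤ (1+ε)^2 * pa^2 := le_of_mul_le_mul_right j1 (pow_pos hLb 2)
  have k2' : pa^2 ≤ (1+ε)^2 * pb^2 := le_of_mul_le_mul_right j2 (pow_pos hLa 2)
  have hub : pb ≤ (1+ε) * pa :=
    (pow_le_pow_iff_left₀ hpb.le (by positivity) two_ne_zero).mp (by nlinarith [k1'])
  have hlb : pa ≤ (1+ε) * pb :=
    (pow_le_pow_iff_left₀ hpa.le (by positivity) two_ne_zero).mp (by nlinarith [k2'])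
  rw [abs_le]
  constructor <;> nlinarith

open MeasureTheory in
/-- Comparison of Jacobi coefficients of mutually absolutely continuous
measures: if `dσ̂ = f dσ` with `(1+ε)⁻¹ ≤ f ≤ 1+ε`, then the off-diagonal
recurrence coefficients of the orthonormal polynomials of `σ` and `σ̂` satisfy
`|p̂_s − p_s| ≤ ε p_s` for every `s`. -/
theorem stmt_2 (σ σₕ : Measure ℝ) [IsFiniteMeasure σ] [IsFiniteMeasure σₕ]
    (R : ℝ) (hsupp : σ {x | R < |x|} = 0)
    (hinf : ∀ F : Finset ℝ, σ ((↑F : Set ℝ)ᶜ) ≠ 0)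
    (ε : ℝ) (hε : 0 ≤ ε) (f : ℝ → ℝ) (hf : Measurable f)
    (hdens : σₕ = σ.withDensity (fun x => ENNReal.ofReal (f x)))
    (hfl : ∀ x, (1 + ε)⁻¹ ≤ f x) (hfu : ∀ x, f x ≤ 1 + ε)
    (P Pₕ : ℕ → Polynomial ℝ) (p q pₕ qₕ : ℕ → ℝ)
    (hdeg : ∀ k, (P k).natDegree = k) (hlead : ∀ k, 0 < (P k).leadingCoeff)
    (horth : ∀ j k, ∫ x, (P j).eval x * (P k).eval x ∂σ = if j = k then 1 else 0)
    (hp : ∀ k, 1 ≤ k → 0 < p k)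
    (hrec0 : ∀ x : ℝ, x * (P 0).eval x = q 0 * (P 0).eval x + p 1 * (P 1).eval x)
    (hrec : ∀ k, 1 ≤ k → ∀ x : ℝ,
      x * (P k).eval x
        = p k * (P (k - 1)).eval x + q k * (P k).eval x + p (k + 1) * (P (k + 1)).eval x)
    (hdegₕ : ∀ k, (Pₕ k).natDegree = k) (hleadₕ : ∀ k, 0 < (Pₕ k).leadingCoeff)
    (horthₕ : ∀ j k, ∫ x, (Pₕ j).eval x * (Pₕ k).eval x ∂σₕ = if j = k then 1 else 0)
    (hpₕ : ∀ k, 1 ≤ k → 0 < pₕ k)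
    (hrec0ₕ : ∀ x : ℝ, x * (Pₕ 0).eval x = qₕ 0 * (Pₕ 0).eval x + pₕ 1 * (Pₕ 1).eval x)
    (hrecₕ : ∀ k, 1 ≤ k → ∀ x : ℝ,
      x * (Pₕ k).eval x
        = pₕ k * (Pₕ (k - 1)).eval x + qₕ k * (Pₕ k).eval x + pₕ (k + 1) * (Pₕ (k + 1)).eval x) :
    ∀ s : ℕ, 1 ≤ s → |pₕ s - p s| ≤ ε * p s := by
  have hone : (0:ℝ) < 1 + ε := by linarith
  have hfpos : ∀ x, 0 < f x := fun x => lt_of_lt_of_le (by positivity) (hfl x)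
  -- support of σₕ
  have hsuppₕ : σₕ {x | R < |x|} = 0 := by
    rw [hdens]
    exact (withDensity_absolutelyContinuous σ _) hsupp
  -- transfer of integrals
  have hint : ∀ g : ℝ → ℝ, ∫ x, g x ∂σₕ = ∫ x, f x * g x ∂σ := by
    intro g
    rw [hdens]
    rw [show (fun x => ENNReal.ofReal (f x))
        = fun x => (((f x).toNNReal : NNReal) : ENNReal) from rfl]
    rw [integral_withDensity_eq_integral_smul hf.real_toNNReal g]
    congr 1
    funext x
    simp [NNReal.smul_def, Real.coe_toNNReal _ (hfpos x).le]
  -- integrability of f * poly under σ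
  have hintf : ∀ g : Polynomial ℝ, Integrable (fun x => f x * g.eval x) σ := by
    intro g
    refine Integrable.mono' (((integrable_poly_eval σ R hsupp g).abs).const_mul (1+ε))
      ((hf.mul g.continuous.measurable).aestronglyMeasurable) ?_
    filter_upwards with x
    have := hfu x
    have := (hfpos x).le
    rw [Real.norm_eq_abs, abs_mul, abs_of_nonneg (hfpos x).le]
    exact mul_le_mul_of_nonneg_right (hfu x) (abs_nonneg _)
  -- comparison of integrals of nonneg polynomials
  have hcmp1 : ∀ g : Polynomial ℝ, (∀ x, 0 ≤ g.eval x) →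
      ∫ x, g.eval x ∂σₕ ≤ (1+ε) * ∫ x, g.eval x ∂σ := by
    intro g hg
    rw [hint, ← integral_const_mul]
    refine integral_mono (hintf g) (((integrable_poly_eval σ R hsupp g)).const_mul (1+ε)) ?_
    intro x
    exact mul_le_mul_of_nonneg_right (hfu x) (hg x)
  have hcmp2 : ∀ g : Polynomial ℝ, (∀ x, 0 ≤ g.eval x) →
      ∫ x, g.eval x ∂σ ≤ (1+ε) * ∫ x, g.eval x ∂σₕ := by
    intro g hg
    rw [hint]
    have h1 : ∫ x, g.eval x ∂σ ≤ (1+ε) * ∫ x, (1+ε)⁻¹ * g.eval x ∂σ := by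
      rw [integral_const_mul, ← mul_assoc, mul_inv_cancel₀ (ne_of_gt hone), one_mul]
    refine h1.trans (mul_le_mul_of_nonneg_left ?_ hone.le)
    refine integral_mono (((integrable_poly_eval σ R hsupp g)).const_mul _) (hintf g) ?_
    intro x
    exact mul_le_mul_of_nonneg_right (hfl x) (hg x)
  -- leading coefficient comparisons
  have hA : ∀ s : ℕ, (P s).leadingCoeff^2 ≤ (1+ε) * (Pₕ s).leadingCoeff^2 := by
    intro s
    have hb := bessel σₕ R hsuppₕ Pₕ hdegₕ hleadₕ horthₕ s (P s) (le_of_eq (hdeg s))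
    have hco : (P s).coeff s = (P s).leadingCoeff := by rw [leadingCoeff, hdeg]
    have hup : ∫ x, ((P s).eval x)^2 ∂σₕ ≤ (1+ε) := by
      have h2 := hcmp1 (P s * P s) (fun x => by simp [eval_mul]; exact mul_self_nonneg _)
      have h3 : ∫ x, ((P s * P s).eval x) ∂σ = 1 := by
        simpa [eval_mul] using horth s s
      rw [h3, mul_one] at h2
      simpa [eval_mul, pow_two] using h2
    rw [hco] at hb
    have h4 : ((P s).leadingCoeff / (Pₕ s).leadingCoeff)^2 ≤ 1+ε := le_trans hb hup
    rw [div_pow, div_le_iff₀ (pow_pos (hleadₕ s) 2)] at h4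
    linarith [h4]
  have hB : ∀ s : ℕ, (Pₕ s).leadingCoeff^2 ≤ (1+ε) * (P s).leadingCoeff^2 := by
    intro s
    have hb := bessel σ R hsupp P hdeg hlead horth s (Pₕ s) (le_of_eq (hdegₕ s))
    have hco : (Pₕ s).coeff s = (Pₕ s).leadingCoeff := by rw [leadingCoeff, hdegₕ]
    have hup : ∫ x, ((Pₕ s).eval x)^2 ∂σ ≤ (1+ε) := by
      have h2 := hcmp2 (Pₕ s * Pₕ s) (fun x => by simp [eval_mul]; exact mul_self_nonneg _)
      have h3 : ∫ x, ((Pₕ s * Pₕ s).eval x) ∂σₕ = 1 := by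
        simpa [eval_mul] using horthₕ s s
      rw [h3, mul_one] at h2
      simpa [eval_mul, pow_two] using h2
    rw [hco] at hb
    have h4 : ((Pₕ s).leadingCoeff / (P s).leadingCoeff)^2 ≤ 1+ε := le_trans hb hup
    rw [div_pow, div_le_iff₀ (pow_pos (hlead s) 2)] at h4
    linarith [h4]
  -- leading coefficient recurrences
  have hLrec : ∀ P' : ℕ → Polynomial ℝ, ∀ p' q' : ℕ → ℝ,
      (∀ k, (P' k).natDegree = k) →
      (∀ x : ℝ, x * (P' 0).eval x = q' 0 * (P' 0).eval x + p' 1 * (P' 1).eval x) →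
      (∀ k, 1 ≤ k → ∀ x : ℝ, x * (P' k).eval x
        = p' k * (P' (k - 1)).eval x + q' k * (P' k).eval x + p' (k + 1) * (P' (k + 1)).eval x) →
      ∀ k : ℕ, (P' k).leadingCoeff = p' (k+1) * (P' (k+1)).leadingCoeff := by
    intro P' p' q' hdeg' hrec0' hrec' k
    have hco : ∀ m j : ℕ, m < j → (P' m).coeff j = 0 := fun m j h =>
      coeff_eq_zero_of_natDegree_lt (by rw [hdeg']; exact h)
    cases k with
    | zero =>
      have hpoly : (X : Polynomial ℝ) * P' 0 = C (q' 0) * P' 0 + C (p' 1) * P' 1 :=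
        Polynomial.funext fun x => by simpa using hrec0' x
      have h := congrArg (fun r => r.coeff 1) hpoly
      simpa [coeff_X_mul, coeff_C_mul, hco 0 1 (by omega), leadingCoeff, hdeg'] using h
    | succ t =>
      have hpoly : (X : Polynomial ℝ) * P' (t+1)
          = C (p' (t+1)) * P' t + C (q' (t+1)) * P' (t+1) + C (p' (t+2)) * P' (t+2) :=
        Polynomial.funext fun x => by simpa using hrec' (t+1) (by omega) x
      have h := congrArg (fun r => r.coeff (t+2)) hpoly
      simpa [coeff_X_mul, coeff_C_mul, hco t (t+2) (by omega), hco (t+1) (t+2) (by omega),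
        leadingCoeff, hdeg'] using h
  -- finish
  intro s hs
  obtain ⟨t, rfl⟩ : ∃ t, s = t + 1 := ⟨s - 1, by omega⟩
  have e1 := hLrec P p q hdeg hrec0 hrec t
  have e2 := hLrec Pₕ pₕ qₕ hdegₕ hrec0ₕ hrecₕ t
  have hA1 := hA t
  have hB1 := hB t
  have hA2 := hA (t+1)
  have hB2 := hB (t+1)
  have hp1 := hp (t+1) (by omega)
  have hp2 := hpₕ (t+1) (by omega)
  have hLp1 := hlead (t+1)
  have hLp2 := hleadₕ (t+1)
  have hLt1 := hlead t
  have hLt2 := hleadₕ t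
  have e1' : (P t).leadingCoeff^2 = (p (t+1))^2 * (P (t+1)).leadingCoeff^2 := by
    rw [e1]; ring
  have e2' : (Pₕ t).leadingCoeff^2 = (pₕ (t+1))^2 * (Pₕ (t+1)).leadingCoeff^2 := by
    rw [e2]; ring
  have h1 : (pₕ (t+1))^2 * (Pₕ (t+1)).leadingCoeff^2
      ≤ (1+ε) * ((p (t+1))^2 * (P (t+1)).leadingCoeff^2) := by
    rw [← e1', ← e2']; exact hB1
  have h2 : (p (t+1))^2 * (P (t+1)).leadingCoeff^2
      ≤ (1+ε) * ((pₕ (t+1))^2 * (Pₕ (t+1)).leadingCoeff^2) := by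
    rw [← e1', ← e2']; exact hA1
  exact jacobi_ratio ε (p (t+1)) (pₕ (t+1)) _ _ hε hp1 hp2 hLp1 hLp2 h1 h2 hA2 hB2
end

section
/- If the Renormalization Equation V*(z − J)^{-1}V = (T(z) − J̃)^{-1} T'(z)/d holds for all z outside the spectra, then the two polynomial identities V* T(J) = J̃ V* and V* [(T(z) − T(J))/(z − J)] V = T'(z)/d (as a polynomial identity in z) hold; conversely, these two identities imply the Renormalization Equation. -/
open Finset Polynomial ContinuousLinearMap

section AuxNorm

/-- A vector whose norm is bounded by `C/(t-B)` for all large `t` is zero. -/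
lemma aux_zero {E : Type*} [NormedAddCommGroup E] (x : E) (C B R : ℝ)
    (h : ∀ t : ℝ, R < t → ‖x‖ ≤ C / (t - B)) : x = 0 := by
  by_contra hx
  have hn : 0 < ‖x‖ := norm_pos_iff.2 hx
  set t : ℝ := max R (max B (B + C / ‖x‖)) + 1 with ht
  have h1 : R < t := lt_of_le_of_lt (le_max_left _ _) (lt_add_one _)
  have h2 : B < t := lt_of_le_of_lt ((le_max_left _ _).trans (le_max_right _ _)) (lt_add_one _)
  have h3 : C / ‖x‖ < t - B := by
    have : B + C / ‖x‖ < t :=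
      lt_of_le_of_lt ((le_max_right _ _).trans (le_max_right _ _)) (lt_add_one _)
    linarith
  have h4 : C / (t - B) < ‖x‖ := by
    rw [div_lt_iff₀ (by linarith)]
    have h5 := (div_lt_iff₀ hn).1 h3
    nlinarith
  exact absurd (h t h1) (not_le.2 h4)

/-- Coefficients of a vector-valued polynomial decaying like `C/t` vanish. -/
lemma aux_coeff {E : Type*} [NormedAddCommGroup E] [NormedSpace ℂ E] :
    ∀ (N : ℕ) (c : ℕ → E) (C R : ℝ),
      (∀ t : ℝ, R < t → ‖∑ i ∈ range N, ((t : ℂ)) ^ i • c i‖ ≤ C / t) →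
      ∀ i < N, c i = 0 := by
  intro N
  induction N with
  | zero => intro c C R h i hi; omega
  | succ N ih =>
    intro c C R h
    have key : c N = 0 := by
      apply aux_zero (c N) (|C| + ∑ i ∈ range N, ‖c i‖) 0 (max R 1)
      intro t ht
      rw [sub_zero]
      have htR : R < t := lt_of_le_of_lt (le_max_left _ _) ht
      have ht1 : 1 < t := lt_of_le_of_lt (le_max_right _ _) ht
      have ht0 : 0 < t := by linarith
      have htN : (0:ℝ) < t ^ N := pow_pos ht0 N
      have hnorm : t ^ N * ‖c N‖ ≤ C / t + ∑ i ∈ range N, t ^ i * ‖c i‖ := by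
        have e1 : (t:ℂ)^N • c N =
            (∑ i ∈ range (N+1), ((t : ℂ)) ^ i • c i) - ∑ i ∈ range N, ((t : ℂ)) ^ i • c i := by
          rw [Finset.sum_range_succ]; abel
        have e2 : ‖(t:ℂ)^N • c N‖ = t ^ N * ‖c N‖ := by
          rw [norm_smul, norm_pow, Complex.norm_real, Real.norm_eq_abs, abs_of_pos ht0]
        rw [← e2, e1]
        refine (norm_sub_le _ _).trans (add_le_add (h t htR) ?_)
        refine (norm_sum_le _ _).trans (le_of_eq (Finset.sum_congr rfl fun i _ => ?_))
        rw [norm_smul, norm_pow, Complex.norm_real, Real.norm_eq_abs, abs_of_pos ht0]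
      calc ‖c N‖ = t ^ N * ‖c N‖ / t ^ N := by field_simp
        _ ≤ (C / t + ∑ i ∈ range N, t ^ i * ‖c i‖) / t ^ N := by gcongr
        _ = C / t / t ^ N + ∑ i ∈ range N, t ^ i * ‖c i‖ / t ^ N := by
            rw [add_div, Finset.sum_div]
        _ ≤ |C| / t + ∑ i ∈ range N, ‖c i‖ / t := by
            refine add_le_add ?_ (Finset.sum_le_sum fun i hi => ?_)
            · have h1t : (1:ℝ) ≤ t ^ N := by
                simpa using pow_le_pow_right₀ (le_of_lt ht1) (Nat.zero_le N)
              calc C / t / t ^ N ≤ |C| / t / t ^ N := by gcongr; exact le_abs_self C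
                _ ≤ |C| / t := div_le_self (by positivity) h1t
            · have hiN : i + 1 ≤ N := Finset.mem_range.1 hi
              rw [div_le_div_iff₀ htN ht0]
              calc t ^ i * ‖c i‖ * t = t ^ (i+1) * ‖c i‖ := by rw [pow_succ]; ring
                _ ≤ t ^ N * ‖c i‖ :=
                    mul_le_mul_of_nonneg_right (pow_le_pow_right₀ (le_of_lt ht1) hiN)
                      (norm_nonneg _)
                _ = ‖c i‖ * t ^ N := mul_comm _ _
        _ = (|C| + ∑ i ∈ range N, ‖c i‖) / t := by
            rw [add_div, Finset.sum_div]
    have h' : ∀ t : ℝ, R < t → ‖∑ i ∈ range N, ((t : ℂ)) ^ i • c i‖ ≤ C / t := by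
      intro t ht
      have := h t ht
      rwa [Finset.sum_range_succ, key, smul_zero, add_zero] at this
    intro i hi
    rcases Nat.lt_succ_iff_lt_or_eq.1 hi with h2 | h2
    · exact ih c C R h' i h2
    · rw [h2]; exact key

end AuxNorm

section AuxAlg

variable {A : Type*} [Ring A] [Algebra ℂ A]

/-- The divided-difference operator polynomial. -/
noncomputable def Sdd (T : Polynomial ℂ) (J : A) (z : ℂ) : A :=
  ∑ k ∈ range (T.natDegree + 1), ∑ i ∈ range k, (T.coeff k * z ^ i) • J ^ (k - 1 - i)

lemma commute_J_Sdd (T : Polynomial ℂ) (J : A) (z : ℂ) : Commute J (Sdd T J z) :=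
  Commute.sum_right _ _ _ fun k _ => Commute.sum_right _ _ _ fun i _ =>
    ((Commute.refl J).pow_right _).smul_right _

lemma commute_aeval (J : A) (p : Polynomial ℂ) : Commute J (aeval J p) := by
  rw [aeval_eq_sum_range]
  exact Commute.sum_right _ _ _ fun k _ => ((Commute.refl J).pow_right _).smul_right _

lemma Sdd_mul_left (T : Polynomial ℂ) (J : A) (z : ℂ) :
    (z • 1 - J) * Sdd T J z = T.eval z • 1 - aeval J T := by
  unfold Sdd
  rw [Finset.mul_sum]
  have step : ∀ k ∈ range (T.natDegree + 1),
      (z • 1 - J) * (∑ i ∈ range k, (T.coeff k * z ^ i) • J ^ (k - 1 - i))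
        = (T.coeff k * z ^ k) • (1 : A) - T.coeff k • J ^ k := by
    intro k _
    rw [Finset.mul_sum]
    have e1 : ∀ i ∈ range k,
        (z • 1 - J) * ((T.coeff k * z ^ i) • J ^ (k - 1 - i))
          = (fun j => (T.coeff k * z ^ j) • J ^ (k - j)) (i + 1)
            - (fun j => (T.coeff k * z ^ j) • J ^ (k - j)) i := by
      intro i hi
      have hik : i < k := Finset.mem_range.1 hi
      simp only []
      have hexp : k - (i + 1) = k - 1 - i := by omega
      rw [hexp, sub_mul, smul_one_mul, smul_smul]
      have hJ : J * ((T.coeff k * z ^ i) • J ^ (k - 1 - i)) = (T.coeff k * z ^ i) • J ^ (k - i) := by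
        rw [mul_smul_comm]
        congr 1
        rw [← pow_succ']
        congr 1
        omega
      rw [hJ]
      have hz2 : z * (T.coeff k * z ^ i) = T.coeff k * z ^ (i + 1) := by ring
      rw [hz2]
    rw [Finset.sum_congr rfl e1, Finset.sum_range_sub (fun j => (T.coeff k * z ^ j) • J ^ (k - j))]
    simp
  rw [Finset.sum_congr rfl step, Finset.sum_sub_distrib, ← Finset.sum_smul,
    ← eval_eq_sum_range, aeval_eq_sum_range]

lemma Sdd_mul_right (T : Polynomial ℂ) (J : A) (z : ℂ) :
    Sdd T J z * (z • 1 - J) = T.eval z • 1 - aeval J T := by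
  have hc : Commute (z • 1 - J) (Sdd T J z) := by
    refine Commute.sub_left ?_ (commute_J_Sdd T J z)
    have : Commute (1 : A) (Sdd T J z) := Commute.one_left _
    exact this.smul_left z
  rw [← hc.eq, Sdd_mul_left]

lemma swap_sum {E : Type*} [AddCommMonoid E] (N : ℕ) (f : ℕ → ℕ → E) :
    ∑ k ∈ range (N + 1), ∑ i ∈ range k, f k i
      = ∑ i ∈ range N, ∑ k ∈ range (N + 1), (if i < k then f k i else 0) := by
  rw [Finset.sum_comm]
  refine Finset.sum_congr rfl fun k hk => ?_
  have hkN : k ≤ N := by have := Finset.mem_range.1 hk; omega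
  rw [← Finset.sum_subset (Finset.range_subset_range.2 hkN)
      (fun i _ hi => by rw [if_neg (by simpa using hi)])]
  exact Finset.sum_congr rfl fun i hi => (if_pos (Finset.mem_range.1 hi)).symm

end AuxAlg

section AuxAnalysis

variable {A : Type*} [NormedRing A] [NormedAlgebra ℂ A] [CompleteSpace A]

lemma isUnit_smul_one_sub (J : A) (z : ℂ) (h : ‖J‖ < ‖z‖) : IsUnit (z • 1 - J) := by
  have hz : z ≠ 0 := by
    rintro rfl
    simp only [norm_zero] at h
    exact absurd h (not_lt.2 (norm_nonneg J))
  have h0 : 0 < ‖z‖ := norm_pos_iff.2 hz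
  have h1 : ‖z⁻¹ • J‖ < 1 := by
    rw [norm_smul, norm_inv]
    rw [inv_mul_lt_iff₀ h0, mul_one]
    exact h
  have hu : IsUnit ((1 : A) - z⁻¹ • J) := isUnit_one_sub_of_norm_lt_one h1
  have he : z • (1 : A) - J = (z • (1 : A)) * ((1 : A) - z⁻¹ • J) := by
    rw [mul_sub, mul_one, smul_one_mul, smul_smul, mul_inv_cancel₀ hz, one_smul]
  rw [he]
  refine IsUnit.mul ?_ hu
  have : IsUnit ((algebraMap ℂ A) z) := (isUnit_iff_ne_zero.2 hz).map (algebraMap ℂ A)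
  rwa [Algebra.algebraMap_eq_smul_one] at this

end AuxAnalysis

section AuxHilbert

variable {H : Type*} [NormedAddCommGroup H] [InnerProductSpace ℂ H] [CompleteSpace H]

lemma resolvent_norm (J : H →L[ℂ] H) (t : ℝ) (h : ‖J‖ < t) :
    ‖Ring.inverse ((t : ℂ) • (1 : H →L[ℂ] H) - J)‖ ≤ 1 / (t - ‖J‖) := by
  have ht0 : 0 < t := lt_of_le_of_lt (norm_nonneg J) h
  have htJ : 0 < t - ‖J‖ := by linarith
  have hnz : ‖J‖ < ‖(t : ℂ)‖ := by
    rwa [Complex.norm_real, Real.norm_eq_abs, abs_of_pos ht0]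
  have hu : IsUnit ((t : ℂ) • (1 : H →L[ℂ] H) - J) := isUnit_smul_one_sub J _ hnz
  set u : H →L[ℂ] H := (t : ℂ) • (1 : H →L[ℂ] H) - J with hu_def
  set Rv : H →L[ℂ] H := Ring.inverse u with hRv
  refine ContinuousLinearMap.opNorm_le_bound _ (by positivity) fun y => ?_
  have h2 : u (Rv y) = y := by
    have hmul : u * Rv = 1 := Ring.mul_inverse_cancel u hu
    calc u (Rv y) = (u * Rv) y := rfl
      _ = y := by rw [hmul]; rfl
  set x := Rv y with hx
  have h3 : (t - ‖J‖) * ‖x‖ ≤ ‖y‖ := by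
    have h4 : u x = (t : ℂ) • x - J x := by
      simp [hu_def, ContinuousLinearMap.sub_apply, ContinuousLinearMap.smul_apply]
    have h5 : ‖(t : ℂ) • x‖ = t * ‖x‖ := by
      rw [norm_smul, Complex.norm_real, Real.norm_eq_abs, abs_of_pos ht0]
    have h6 : ‖J x‖ ≤ ‖J‖ * ‖x‖ := J.le_opNorm x
    calc (t - ‖J‖) * ‖x‖ = t * ‖x‖ - ‖J‖ * ‖x‖ := by ring
      _ ≤ ‖(t : ℂ) • x‖ - ‖J x‖ := by rw [h5]; linarith
      _ ≤ ‖(t : ℂ) • x - J x‖ := norm_sub_norm_le _ _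
      _ = ‖u x‖ := by rw [h4]
      _ = ‖y‖ := by rw [h2]
  calc ‖x‖ = (t - ‖J‖) * ‖x‖ / (t - ‖J‖) := by field_simp
    _ ≤ ‖y‖ / (t - ‖J‖) := by gcongr
    _ = 1 / (t - ‖J‖) * ‖y‖ := by ring

end AuxHilbert

section KeyM
variable {H : Type*} [NormedAddCommGroup H] [InnerProductSpace ℂ H] [CompleteSpace H]

noncomputable def Mc (T : Polynomial ℂ) (d : ℕ) (J V : H →L[ℂ] H) (i : ℕ) : H →L[ℂ] H :=
  (∑ k ∈ range (T.natDegree + 1),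
      if i < k then T.coeff k • (adjoint V * J ^ (k - 1 - i) * V) else 0)
    - ((T.derivative.coeff i) / d) • 1

lemma keyM (T : Polynomial ℂ) (d : ℕ) (J V : H →L[ℂ] H) (hT : T.natDegree ≠ 0) (z : ℂ) :
    adjoint V * Sdd T J z * V - ((T.derivative.eval z) / d) • 1
      = ∑ i ∈ range T.natDegree, z ^ i • Mc T d J V i := by
  have e1 : adjoint V * Sdd T J z * V
      = ∑ i ∈ range T.natDegree, z ^ i •
          ∑ k ∈ range (T.natDegree + 1),
            (if i < k then T.coeff k • (adjoint V * J ^ (k - 1 - i) * V) else 0) := by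
    unfold Sdd
    calc adjoint V * (∑ k ∈ range (T.natDegree + 1),
            ∑ i ∈ range k, (T.coeff k * z ^ i) • J ^ (k - 1 - i)) * V
        = ∑ k ∈ range (T.natDegree + 1), ∑ i ∈ range k,
            (T.coeff k * z ^ i) • (adjoint V * J ^ (k - 1 - i) * V) := by
          rw [Finset.mul_sum, Finset.sum_mul]
          refine Finset.sum_congr rfl fun k _ => ?_
          rw [Finset.mul_sum, Finset.sum_mul]
          refine Finset.sum_congr rfl fun i _ => ?_
          rw [mul_smul_comm, smul_mul_assoc]
      _ = ∑ i ∈ range T.natDegree, ∑ k ∈ range (T.natDegree + 1),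
            (if i < k then (T.coeff k * z ^ i) • (adjoint V * J ^ (k - 1 - i) * V) else 0) :=
          swap_sum _ _
      _ = _ := by
          refine Finset.sum_congr rfl fun i _ => ?_
          rw [Finset.smul_sum]
          refine Finset.sum_congr rfl fun k _ => ?_
          split
          · rw [smul_smul]; congr 1; ring
          · rw [smul_zero]
  have hlt : (T.derivative).natDegree < T.natDegree := natDegree_derivative_lt hT
  have e2 : ((T.derivative.eval z) / d) • (1 : H →L[ℂ] H)
      = ∑ i ∈ range T.natDegree, z ^ i • (((T.derivative.coeff i) / d) • 1) := by
    rw [eval_eq_sum_range' hlt, Finset.sum_div, Finset.sum_smul]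
    refine Finset.sum_congr rfl fun i _ => ?_
    rw [smul_smul]
    congr 1
    ring
  rw [e1, e2, ← Finset.sum_sub_distrib]
  exact Finset.sum_congr rfl fun i _ => by rw [Mc, smul_sub]

end KeyM

section Directional
variable {H : Type*} [NormedAddCommGroup H] [InnerProductSpace ℂ H] [CompleteSpace H]

lemma commute_ring_inverse {A : Type*} [Ring A] {a b : A} (h : Commute a b) (hb : IsUnit b) :
    Commute a (Ring.inverse b) := by
  obtain ⟨v, rfl⟩ := hb
  rw [Ring.inverse_unit]
  exact h.units_inv_right

lemma commute_aeval_smul_sub {A : Type*} [Ring A] [Algebra ℂ A] (J : A) (T : Polynomial ℂ)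
    (z : ℂ) : Commute (aeval J T) (z • (1 : A) - J) := by
  refine Commute.sub_right ?_ (commute_aeval J T).symm
  rw [← Algebra.algebraMap_eq_smul_one]
  exact (Algebra.commutes z _).symm

lemma hrel_lemma {A : Type*} [Ring A] [Algebra ℂ A] (J D V : A) (z : ℂ)
    (hu : IsUnit (z • (1 : A) - J)) (m : ℕ) :
    z • (D * J ^ m * Ring.inverse (z • (1 : A) - J) * V)
      = D * J ^ m * V + D * J ^ (m + 1) * Ring.inverse (z • (1 : A) - J) * V := by
  set Ru := Ring.inverse (z • (1 : A) - J) with hRu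
  have h1 : z • Ru = 1 + J * Ru := by
    have h : (z • (1 : A) - J) * Ru = 1 := Ring.mul_inverse_cancel _ hu
    rw [sub_mul, smul_one_mul] at h
    exact eq_add_of_sub_eq h
  calc z • (D * J ^ m * Ru * V) = (z • (D * J ^ m * Ru)) * V := by rw [smul_mul_assoc]
    _ = ((D * J ^ m) * (z • Ru)) * V := by rw [mul_smul_comm]
    _ = ((D * J ^ m) * (1 + J * Ru)) * V := by rw [h1]
    _ = D * J ^ m * V + ((D * J ^ m * J) * Ru) * V := by
        rw [mul_add, mul_one, add_mul, ← mul_assoc]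
    _ = D * J ^ m * V + D * J ^ (m + 1) * Ru * V := by
        rw [mul_assoc D (J ^ m) J, ← pow_succ]

lemma forward_step (T : Polynomial ℂ) (d : ℕ) (J Jt V : H →L[ℂ] H) (hT : T.natDegree ≠ 0)
    (z : ℂ) (hu : IsUnit (z • (1 : H →L[ℂ] H) - J))
    (hut : IsUnit (T.eval z • (1 : H →L[ℂ] H) - Jt))
    (hhyp : adjoint V * Ring.inverse (z • (1 : H →L[ℂ] H) - J) * V
      = (T.derivative.eval z / d) • Ring.inverse (T.eval z • (1 : H →L[ℂ] H) - Jt)) :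
    ∑ i ∈ range T.natDegree, z ^ i • Mc T d J V i
      = (Jt * adjoint V - adjoint V * aeval J T) * Ring.inverse (z • (1 : H →L[ℂ] H) - J) * V := by
  set W := adjoint V with hW
  set B := aeval J T with hBdef
  set Ru := Ring.inverse (z • (1 : H →L[ℂ] H) - J) with hRu
  set Rt := Ring.inverse (T.eval z • (1 : H →L[ℂ] H) - Jt) with hRt
  rw [← keyM T d J V hT z]
  have hS : Sdd T J z = Ru * (T.eval z • 1 - B) := by
    calc Sdd T J z = Ru * ((z • 1 - J) * Sdd T J z) := by
          rw [← mul_assoc, hRu, Ring.inverse_mul_cancel _ hu, one_mul]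
      _ = Ru * (T.eval z • 1 - B) := by rw [Sdd_mul_left]
  have hBRu : B * Ru = Ru * B :=
    commute_ring_inverse (commute_aeval_smul_sub J T z) hu
  have hut1 : (T.eval z • (1 : H →L[ℂ] H) - Jt) * Rt = 1 := Ring.mul_inverse_cancel _ hut
  have e1 : W * Sdd T J z * V = T.eval z • (W * Ru * V) - W * Ru * B * V := by
    rw [hS]
    calc W * (Ru * (T.eval z • 1 - B)) * V
        = W * (T.eval z • Ru - Ru * B) * V := by rw [mul_sub, mul_smul_one]
      _ = (T.eval z • (W * Ru) - W * (Ru * B)) * V := by rw [mul_sub W, mul_smul_comm]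
      _ = T.eval z • (W * Ru * V) - W * (Ru * B) * V := by rw [sub_mul, smul_mul_assoc]
      _ = T.eval z • (W * Ru * V) - W * Ru * B * V := by rw [← mul_assoc W Ru B]
  have e2 : T.eval z • ((T.derivative.eval z / d) • Rt) - (T.derivative.eval z / d) • 1
      = Jt * ((T.derivative.eval z / d) • Rt) := by
    rw [← hut1, sub_mul, smul_one_mul, smul_sub]
    rw [smul_comm (T.eval z) (T.derivative.eval z / (d:ℂ)) Rt]
    rw [mul_smul_comm]
    abel
  have e3 : W * Ru * B * V = W * B * Ru * V := by
    rw [mul_assoc W Ru B, ← hBRu, ← mul_assoc W B Ru]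
  rw [e1, hhyp, sub_right_comm, e2, ← hhyp, e3]
  rw [sub_mul, sub_mul, ← mul_assoc Jt (W * Ru) V, ← mul_assoc Jt W Ru]

lemma reverse_step (T : Polynomial ℂ) (d : ℕ) (J Jt V : H →L[ℂ] H)
    (hA : adjoint V * aeval J T = Jt * adjoint V) (z : ℂ)
    (hB2 : adjoint V * Sdd T J z * V = (T.derivative.eval z / d) • 1)
    (hu : IsUnit (z • (1 : H →L[ℂ] H) - J))
    (hut : IsUnit (T.eval z • (1 : H →L[ℂ] H) - Jt)) :
    adjoint V * Ring.inverse (z • (1 : H →L[ℂ] H) - J) * V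
      = (T.derivative.eval z / d) • Ring.inverse (T.eval z • (1 : H →L[ℂ] H) - Jt) := by
  set W := adjoint V with hW
  set B := aeval J T with hBdef
  set Ru := Ring.inverse (z • (1 : H →L[ℂ] H) - J) with hRu
  set Rt := Ring.inverse (T.eval z • (1 : H →L[ℂ] H) - Jt) with hRt
  have key : (T.eval z • (1 : H →L[ℂ] H) - Jt) * (W * Ru * V)
      = (T.derivative.eval z / d) • 1 := by
    calc (T.eval z • (1 : H →L[ℂ] H) - Jt) * (W * Ru * V)
        = T.eval z • (W * Ru * V) - Jt * (W * Ru * V) := by rw [sub_mul, smul_one_mul]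
      _ = (W * (T.eval z • Ru)) * V - ((Jt * W) * Ru) * V := by
          rw [← smul_mul_assoc, ← mul_smul_comm, ← mul_assoc Jt (W * Ru) V,
            ← mul_assoc Jt W Ru]
      _ = (W * (T.eval z • Ru)) * V - ((W * B) * Ru) * V := by rw [← hA]
      _ = (W * (T.eval z • Ru - B * Ru)) * V := by
          rw [mul_assoc W B Ru, ← sub_mul, ← mul_sub]
      _ = (W * ((T.eval z • 1 - B) * Ru)) * V := by rw [sub_mul, smul_one_mul]
      _ = W * Sdd T J z * V := by
          have h0 : (T.eval z • (1 : H →L[ℂ] H) - B) = Sdd T J z * (z • 1 - J) :=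
            (Sdd_mul_right T J z).symm
          rw [h0, mul_assoc (Sdd T J z) (z • (1 : H →L[ℂ] H) - J) Ru, hRu,
            Ring.mul_inverse_cancel _ hu, mul_one]
      _ = (T.derivative.eval z / d) • 1 := hB2
  calc W * Ru * V
      = Rt * ((T.eval z • (1 : H →L[ℂ] H) - Jt) * (W * Ru * V)) :=
        (Ring.inverse_mul_cancel_left _ _ hut).symm
    _ = Rt * ((T.derivative.eval z / d) • 1) := by rw [key]
    _ = (T.derivative.eval z / d) • Rt := by rw [mul_smul_comm, mul_one]

end Directional

set_option maxHeartbeats 1000000 in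
open ContinuousLinearMap Polynomial in
/-- Equivalence of the Renormalization Equation
`V*(z − J)⁻¹V = (T(z) − J̃)⁻¹ T'(z)/d` (for `z` in the joint resolvent set) with
the pair of polynomial identities `V* T(J) = J̃ V*` and
`V* [(T(z) − T(J))/(z − J)] V = (T'(z)/d)·1`, where the divided difference is the
operator-valued polynomial `Σ_k a_k Σ_{i<k} z^i J^{k−1−i}`. -/
theorem stmt_14 {H : Type*} [NormedAddCommGroup H] [InnerProductSpace ℂ H] [CompleteSpace H]
    (T : Polynomial ℂ) (d : ℕ) (hd : d = T.natDegree) (h1 : 1 ≤ d)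
    (J Jt : H →L[ℂ] H) (hJ : IsSelfAdjoint J) (hJt : IsSelfAdjoint Jt)
    (V : H →L[ℂ] H) (hV : adjoint V * V = 1) :
    (∀ z : ℂ, IsUnit (z • (1 : H →L[ℂ] H) - J) →
        IsUnit (T.eval z • (1 : H →L[ℂ] H) - Jt) →
        adjoint V * Ring.inverse (z • (1 : H →L[ℂ] H) - J) * V
          = (T.derivative.eval z / d) • Ring.inverse (T.eval z • (1 : H →L[ℂ] H) - Jt))
    ↔ ((adjoint V * Polynomial.aeval J T = Jt * adjoint V) ∧
        ∀ z : ℂ,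
          adjoint V *
              (∑ k ∈ Finset.range (T.natDegree + 1), ∑ i ∈ Finset.range k,
                (T.coeff k * z ^ i) • J ^ (k - 1 - i)) * V
            = (T.derivative.eval z / d) • (1 : H →L[ℂ] H)) := by
  have hn0 : T.natDegree ≠ 0 := by omega
  constructor
  · intro hyp
    obtain ⟨R₁, hR₁⟩ : ∃ R₁ : ℝ, ∀ t : ℝ, R₁ < t → ‖Jt‖ < ‖T.eval ((t : ℂ))‖ := by
      have hdeg : 0 < T.degree := natDegree_pos_iff_degree_pos.1 (by omega)
      have habs : Filter.Tendsto (fun t : ℝ => ‖((t : ℂ))‖) Filter.atTop Filter.atTop := by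
        simpa [Complex.norm_real, Real.norm_eq_abs] using Filter.tendsto_abs_atTop_atTop
      have htend := T.tendsto_norm_atTop hdeg habs
      obtain ⟨R₁, h⟩ := Filter.eventually_atTop.1 (htend.eventually_gt_atTop ‖Jt‖)
      exact ⟨R₁, fun t ht => h t (le_of_lt ht)⟩
    set R₀ : ℝ := max R₁ (2 * ‖J‖ + 1) with hR₀
    have hJt' : ∀ t : ℝ, R₀ < t → 2 * ‖J‖ + 1 ≤ t := fun t ht =>
      le_of_lt (lt_of_le_of_lt (le_max_right _ _) ht)
    have htpos : ∀ t : ℝ, R₀ < t → 0 < t := fun t ht => by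
      have h2 := hJt' t ht; have h3 := norm_nonneg J; linarith
    have hJlt : ∀ t : ℝ, R₀ < t → ‖J‖ < t := fun t ht => by
      have h2 := hJt' t ht; have h3 := norm_nonneg J; linarith
    have hu1 : ∀ t : ℝ, R₀ < t → IsUnit ((t : ℂ) • (1 : H →L[ℂ] H) - J) := fun t ht => by
      apply isUnit_smul_one_sub
      rw [Complex.norm_real, Real.norm_eq_abs, abs_of_pos (htpos t ht)]
      exact hJlt t ht
    have hu2 : ∀ t : ℝ, R₀ < t → IsUnit (T.eval ((t:ℂ)) • (1 : H →L[ℂ] H) - Jt) := fun t ht =>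
      isUnit_smul_one_sub Jt _ (hR₁ t (lt_of_le_of_lt (le_max_left _ _) ht))
    have hresnorm : ∀ t : ℝ, R₀ < t →
        ‖Ring.inverse ((t : ℂ) • (1 : H →L[ℂ] H) - J)‖ ≤ 1 / (t - ‖J‖) := fun t ht =>
      resolvent_norm J t (hJlt t ht)
    have step1 : ∀ t : ℝ, R₀ < t →
        ∑ i ∈ Finset.range T.natDegree, ((t : ℂ)) ^ i • Mc T d J V i
          = (Jt * adjoint V - adjoint V * aeval J T) *
              Ring.inverse ((t : ℂ) • (1 : H →L[ℂ] H) - J) * V := fun t ht =>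
      forward_step T d J Jt V hn0 _ (hu1 t ht) (hu2 t ht) (hyp _ (hu1 t ht) (hu2 t ht))
    have hDbound : ∀ (X : H →L[ℂ] H) (t : ℝ), R₀ < t →
        ‖X * Ring.inverse ((t : ℂ) • (1 : H →L[ℂ] H) - J) * V‖ ≤ ‖X‖ * ‖V‖ / (t - ‖J‖) := by
      intro X t ht
      have h2 : 0 < t - ‖J‖ := by have := hJlt t ht; linarith
      calc ‖X * Ring.inverse ((t : ℂ) • (1:H →L[ℂ] H) - J) * V‖
          ≤ ‖X * Ring.inverse ((t : ℂ) • (1:H →L[ℂ] H) - J)‖ * ‖V‖ := norm_mul_le _ _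
        _ ≤ (‖X‖ * ‖Ring.inverse ((t : ℂ) • (1:H →L[ℂ] H) - J)‖) * ‖V‖ :=
            mul_le_mul_of_nonneg_right (norm_mul_le _ _) (norm_nonneg _)
        _ ≤ (‖X‖ * (1 / (t - ‖J‖))) * ‖V‖ := by
            have h3 := hresnorm t ht
            gcongr
        _ = ‖X‖ * ‖V‖ / (t - ‖J‖) := by ring
    have hMzero : ∀ i < T.natDegree, Mc T d J V i = 0 := by
      apply aux_coeff T.natDegree _
        (2 * (‖Jt * adjoint V - adjoint V * aeval J T‖ * ‖V‖)) R₀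
      intro t ht
      rw [step1 t ht]
      have h2 : 0 < t - ‖J‖ := by have := hJlt t ht; linarith
      have ht0 := htpos t ht
      refine (hDbound _ t ht).trans ?_
      rw [div_le_div_iff₀ h2 ht0]
      have h3 := hJt' t ht
      have h4 : (0:ℝ) ≤ ‖Jt * adjoint V - adjoint V * aeval J T‖ * ‖V‖ := by positivity
      nlinarith
    have hsecond : ∀ z : ℂ, adjoint V * Sdd T J z * V = (T.derivative.eval z / d) • 1 := by
      intro z
      have h0 := keyM T d J V hn0 z
      rw [Finset.sum_eq_zero (fun i hi => by
        rw [hMzero i (Finset.mem_range.1 hi), smul_zero])] at h0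
      exact sub_eq_zero.1 h0
    have hDRV : ∀ t : ℝ, R₀ < t →
        (Jt * adjoint V - adjoint V * aeval J T) *
          Ring.inverse ((t : ℂ) • (1 : H →L[ℂ] H) - J) * V = 0 := by
      intro t ht
      rw [← step1 t ht]
      exact Finset.sum_eq_zero fun i hi => by
        rw [hMzero i (Finset.mem_range.1 hi), smul_zero]
    set D := Jt * adjoint V - adjoint V * aeval J T with hD
    have hstep : ∀ m : ℕ,
        (∀ t : ℝ, R₀ < t → D * J ^ m * Ring.inverse ((t:ℂ) • (1:H →L[ℂ] H) - J) * V = 0) →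
        D * J ^ m * V = 0 := by
      intro m hq
      apply aux_zero _ (‖D * J ^ (m+1)‖ * ‖V‖) ‖J‖ R₀
      intro t ht
      have h0 := hrel_lemma J D V ((t:ℂ)) (hu1 t ht) m
      rw [hq t ht, smul_zero] at h0
      have h0' : D * J ^ m * V
          = -(D * J ^ (m+1) * Ring.inverse ((t:ℂ) • (1:H →L[ℂ] H) - J) * V) :=
        eq_neg_of_add_eq_zero_left h0.symm
      rw [h0', norm_neg]
      exact hDbound _ t ht
    have hQ : ∀ m : ℕ, ∀ t : ℝ, R₀ < t →
        D * J ^ m * Ring.inverse ((t:ℂ) • (1:H →L[ℂ] H) - J) * V = 0 := by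
      intro m
      induction m with
      | zero => intro t ht; simpa [pow_zero, mul_one] using hDRV t ht
      | succ m ih =>
        intro t ht
        have h0 := hrel_lemma J D V ((t:ℂ)) (hu1 t ht) m
        rw [ih t ht, smul_zero, hstep m ih, zero_add] at h0
        exact h0.symm
    have hDJ : ∀ m : ℕ, D * J ^ m * V = 0 := fun m => hstep m (hQ m)
    have hsV : star V = adjoint V := star_eq_adjoint V
    have hsW : star (adjoint V) = V := by rw [← hsV, star_star]
    have hBstar : star (aeval J T) = ∑ k ∈ Finset.range (T.natDegree + 1),
        star (T.coeff k) • J ^ k := by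
      rw [aeval_eq_sum_range, star_sum]
      refine Finset.sum_congr rfl fun k _ => ?_
      rw [star_smul, star_pow, hJ.star_eq]
    have hDBstar : D * star (aeval J T) * V = 0 := by
      rw [hBstar, Finset.mul_sum, Finset.sum_mul]
      refine Finset.sum_eq_zero fun k _ => ?_
      rw [mul_smul_comm, smul_mul_assoc, hDJ k, smul_zero]
    have f1 : adjoint V * aeval J T * V = Jt := by
      have h0 := hDJ 0
      rw [pow_zero, mul_one, hD, sub_mul] at h0
      have h0' : Jt * adjoint V * V = adjoint V * aeval J T * V := sub_eq_zero.1 h0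
      rw [mul_assoc, hV, mul_one] at h0'
      exact h0'.symm
    have f2 : adjoint V * star (aeval J T) * V = Jt := by
      have h0 := congrArg star f1
      rw [star_mul, star_mul, hsV, hsW, hJt.star_eq, ← mul_assoc] at h0
      exact h0
    have f4 : adjoint V * aeval J T * star (aeval J T) * V = Jt * Jt := by
      have h0 := hDBstar
      rw [hD, sub_mul, sub_mul, sub_eq_zero] at h0
      rw [← h0, mul_assoc Jt (adjoint V) (star (aeval J T)),
        mul_assoc Jt (adjoint V * star (aeval J T)) V, f2]
    set Y := star (aeval J T) * V - V * Jt with hY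
    have hYstar : star Y = adjoint V * aeval J T - Jt * adjoint V := by
      rw [hY, star_sub, star_mul, star_mul, star_star, hsV, hJt.star_eq]
    have hYY : star Y * Y = 0 := by
      rw [hYstar, hY, mul_sub, sub_mul, sub_mul]
      have g1 : (adjoint V * aeval J T) * (star (aeval J T) * V) = Jt * Jt := by
        rw [← mul_assoc, f4]
      have g2 : (Jt * adjoint V) * (star (aeval J T) * V) = Jt * Jt := by
        rw [← mul_assoc, mul_assoc Jt (adjoint V) (star (aeval J T)),
          mul_assoc Jt (adjoint V * star (aeval J T)) V, f2]
      have g3 : (adjoint V * aeval J T) * (V * Jt) = Jt * Jt := by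
        rw [← mul_assoc, f1]
      have g4 : (Jt * adjoint V) * (V * Jt) = Jt * Jt := by
        rw [← mul_assoc, mul_assoc Jt (adjoint V) V, hV, mul_one]
      rw [g1, g2, g3, g4]
      simp
    have hY0 : Y = 0 := (CStarRing.star_mul_self_eq_zero_iff Y).1 hYY
    have hfin : adjoint V * aeval J T - Jt * adjoint V = 0 := by
      rw [← hYstar, hY0, star_zero]
    exact ⟨sub_eq_zero.1 hfin, fun z => by simpa only [Sdd] using hsecond z⟩
  · rintro ⟨hA, hB2⟩ z hu hut
    exact reverse_step T d J Jt V hA z (by simpa only [Sdd] using hB2 z) hu hut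
end

section
/- Balanced measure as Ruelle eigenmeasure: a compactly supported probability measure σ on ℝ satisfies ∫ (T'(z)/d)/(T(z) − x) dσ(x) = ∫ 1/(z − x) dσ(x) for all z in a neighborhood of infinity if and only if σ is invariant under the dual Ruelle operator, i.e. ∫ (1/d) Σ_{T(y)=x} f(y) dσ(x) = ∫ f dσ for all continuous f (σ is the balanced measure of T). -/
open Polynomial in
lemma aux_deriv_prod (z : ℝ) (s : Multiset ℝ) (hz : ∀ a ∈ s, z ≠ a) :
    Polynomial.eval z (Polynomial.derivative (s.map (fun a => Polynomial.X - Polynomial.C a)).prod)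
      = (s.map (fun a =>
          Polynomial.eval z (s.map (fun a => Polynomial.X - Polynomial.C a)).prod / (z - a))).sum := by
  induction s using Multiset.induction_on with
  | empty => simp
  | cons a t ih =>
    have hza : z ≠ a := hz a (Multiset.mem_cons_self a t)
    have hzt : ∀ b ∈ t, z ≠ b := fun b hb => hz b (Multiset.mem_cons_of_mem hb)
    have h1 : ((a ::ₘ t).map (fun a => X - C a)).prod
        = (X - C a) * (t.map (fun a => X - C a)).prod := by
      rw [Multiset.map_cons, Multiset.prod_cons]
    rw [h1, derivative_mul]
    simp only [derivative_sub, derivative_X, derivative_C, sub_zero, one_mul]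
    rw [eval_add, eval_mul, eval_mul, ih hzt]
    set Q : ℝ := Polynomial.eval z (t.map (fun a => X - C a)).prod with hQ
    have heva : Polynomial.eval z (X - C a) = z - a := by simp
    rw [heva]
    rw [Multiset.map_cons, Multiset.sum_cons]
    have hne : z - a ≠ 0 := sub_ne_zero.mpr hza
    have hterm : (z - a) * Q / (z - a) = Q := by field_simp
    rw [hterm]
    rw [Multiset.sum_map_mul_left.symm]
    have : (t.map (fun b => (z - a) * Q / (z - b))).sum
        = (t.map (fun b => (z-a) * (Q / (z - b)))).sum := by
      congr 1; apply Multiset.map_congr rfl; intro b hb; rw [mul_div_assoc]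
    rw [this, Multiset.sum_map_mul_left]

open Polynomial in
lemma aux_logderiv (p : Polynomial ℝ) (hcard : Multiset.card p.roots = p.natDegree)
    (hp0 : p ≠ 0) (z : ℝ) (hz : ∀ a ∈ p.roots, z ≠ a) :
    Polynomial.eval z (Polynomial.derivative p) / Polynomial.eval z p
      = ((p.roots.map (fun a => 1 / (z - a))).sum) := by
  have hfact := Polynomial.C_leadingCoeff_mul_prod_multiset_X_sub_C hcard
  set s := p.roots with hs
  set P := (s.map (fun a => X - C a)).prod with hP
  have hlc : p.leadingCoeff ≠ 0 := leadingCoeff_ne_zero.mpr hp0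
  have hQ : Polynomial.eval z P = (s.map (fun a => z - a)).prod := by
    rw [hP, Polynomial.eval_multiset_prod, Multiset.map_map]
    congr 1; apply Multiset.map_congr rfl; intro a ha; simp
  have hQ0 : Polynomial.eval z P ≠ 0 := by
    rw [hQ]
    apply Multiset.prod_ne_zero
    intro h0
    obtain ⟨a, ha, ha0⟩ := Multiset.mem_map.mp h0
    exact (sub_ne_zero.mpr (hz a ha)) ha0
  have hevp : Polynomial.eval z p = p.leadingCoeff * Polynomial.eval z P := by
    conv_lhs => rw [← hfact]
    simp
  have hdp : Polynomial.derivative p = C p.leadingCoeff * Polynomial.derivative P := by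
    conv_lhs => rw [← hfact]
    rw [derivative_mul, derivative_C, zero_mul, zero_add]
  have hDP := aux_deriv_prod z s hz
  rw [hdp, eval_mul, eval_C, hDP, hevp]
  rw [mul_div_mul_left _ _ hlc]
  have : (s.map (fun a => Polynomial.eval z P / (z - a))).sum
      = Polynomial.eval z P * (s.map (fun a => 1 / (z - a))).sum := by
    rw [← Multiset.sum_map_mul_left]
    congr 1; apply Multiset.map_congr rfl; intro a ha
    field_simp
  rw [this, mul_comm, mul_div_assoc, div_self hQ0, mul_one]

open Polynomial in
lemma aux_kernel (T : Polynomial ℝ) (d : ℕ) (hd : d = T.natDegree) (h2 : 2 ≤ d) (x z : ℝ)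
    (hcard : Multiset.card (T - Polynomial.C x).roots = d)
    (hz : ∀ a ∈ (T - Polynomial.C x).roots, z ≠ a)
    (hTz : Polynomial.eval z T ≠ x) :
    (Polynomial.eval z (Polynomial.derivative T) / d) / (Polynomial.eval z T - x)
      = (1 / d : ℝ) * (((T - Polynomial.C x).roots.map (fun y => 1 / (z - y))).sum) := by
  set p := T - Polynomial.C x with hp
  have hnd : p.natDegree = T.natDegree := natDegree_sub_C
  have hp0 : p ≠ 0 := by
    intro h
    have : p.natDegree = 0 := by rw [h]; simp
    omega
  have hder : Polynomial.derivative p = Polynomial.derivative T := by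
    rw [hp, derivative_sub, derivative_C, sub_zero]
  have hev : Polynomial.eval z p = Polynomial.eval z T - x := by simp [hp]
  have := aux_logderiv p (by rw [hnd, ← hd]; exact hcard) hp0 z hz
  rw [hder, hev] at this
  have hd0 : (d : ℝ) ≠ 0 := by positivity
  have hE : Polynomial.eval z T - x ≠ 0 := sub_ne_zero.mpr hTz
  rw [← this]
  field_simp


open Polynomial Filter in
lemma aux_bound (T : Polynomial ℝ) (h2 : 2 ≤ T.natDegree) (M : ℝ) :
    ∃ B, 0 < B ∧ ∀ y : ℝ, B < |y| → M < |Polynomial.eval y T| := by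
  have hdeg : 0 < T.degree := by
    rw [← Polynomial.natDegree_pos_iff_degree_pos]; omega
  have habs : Filter.Tendsto (fun y : ℝ => |y|) (Filter.cocompact ℝ) Filter.atTop := by
    exact Filter.Tendsto.congr (fun y => Real.norm_eq_abs y) (tendsto_norm_cocompact_atTop (E := ℝ))
  have h := Polynomial.tendsto_abv_atTop (abs : ℝ → ℝ) T hdeg (l := Filter.cocompact ℝ)
    (z := id) habs
  have hev : ∀ᶠ y in Filter.cocompact ℝ, M < |Polynomial.eval y T| := by
    simpa using h.eventually_gt_atTop M
  rw [(Filter.hasBasis_cocompact).eventually_iff] at hev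
  obtain ⟨s, hs, hsub⟩ := hev
  obtain ⟨B, hB⟩ := hs.isBounded.subset_closedBall 0
  refine ⟨max B 1, by positivity, fun y hy => ?_⟩
  apply hsub
  intro hmem
  have := hB hmem
  simp only [Metric.mem_closedBall, Real.dist_eq, sub_zero] at this
  have : |y| ≤ max B 1 := le_trans this (le_max_left _ _)
  linarith [hy]


noncomputable def phi (c z : ℝ) (hz : c < |z|) : C(Set.Icc (-c) c, ℝ) :=
  ⟨fun y => (z - (y : ℝ))⁻¹, by
    apply Continuous.inv₀ (continuous_const.sub continuous_subtype_val)
    intro y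
    have h1 : |(y : ℝ)| ≤ c := abs_le.mpr ⟨y.2.1, y.2.2⟩
    intro h
    simp only [Pi.sub_apply, sub_eq_zero] at h
    rw [h] at hz
    linarith [abs_le.mpr ⟨y.2.1, y.2.2⟩]⟩

lemma phi_apply (c z : ℝ) (hz : c < |z|) (y : Set.Icc (-c) c) :
    phi c z hz y = (z - (y : ℝ))⁻¹ := rfl

def genSet (c R : ℝ) : Set C(Set.Icc (-c) c, ℝ) :=
  {1} ∪ {f | ∃ z, ∃ hz : c < |z|, R < |z| ∧ f = phi c z hz}

lemma phi_norm_sub (c z w : ℝ) (hc : 0 ≤ c) (hz : c + 1 ≤ |z|) (hw : c + 1 ≤ |w|) :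
    ‖phi c z (by linarith) - phi c w (by linarith)‖ ≤ |z - w| := by
  apply ContinuousMap.norm_le _ (abs_nonneg _) |>.mpr
  intro y
  have hy : |(y : ℝ)| ≤ c := abs_le.mpr ⟨y.2.1, y.2.2⟩
  have h1 : 1 ≤ |z - (y : ℝ)| := by
    have := abs_sub_abs_le_abs_sub z (y : ℝ)
    linarith [abs_sub_abs_le_abs_sub z (y:ℝ)]
  have h2 : 1 ≤ |w - (y : ℝ)| := by
    linarith [abs_sub_abs_le_abs_sub w (y:ℝ)]
  have hz0 : z - (y : ℝ) ≠ 0 := by intro h; rw [h] at h1; simp at h1; linarith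
  have hw0 : w - (y : ℝ) ≠ 0 := by intro h; rw [h] at h2; simp at h2; linarith
  simp only [ContinuousMap.sub_apply, phi_apply]
  have key : (z - (y:ℝ))⁻¹ - (w - (y:ℝ))⁻¹ = (w - z) / ((z - (y:ℝ)) * (w - (y:ℝ))) := by
    field_simp
    ring
  rw [Real.norm_eq_abs, key, abs_div, abs_mul]
  rw [abs_sub_comm w z]
  have hprod : 1 ≤ |z - (y:ℝ)| * |w - (y:ℝ)| := by nlinarith [abs_nonneg (z - (y:ℝ)), abs_nonneg (w - (y:ℝ))]
  calc |z - w| / (|z - (y:ℝ)| * |w - (y:ℝ)|) ≤ |z - w| / 1 := by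
        gcongr
    _ = |z - w| := div_one _

lemma phi_mul (c z w : ℝ) (hz : c < |z|) (hw : c < |w|) (hzw : z ≠ w) :
    phi c z hz * phi c w hw = (w - z)⁻¹ • (phi c z hz - phi c w hw) := by
  ext y
  have hy : |(y : ℝ)| ≤ c := abs_le.mpr ⟨y.2.1, y.2.2⟩
  have hz0 : z - (y : ℝ) ≠ 0 := by
    intro h; rw [sub_eq_zero] at h; rw [h] at hz; linarith
  have hw0 : w - (y : ℝ) ≠ 0 := by
    intro h; rw [sub_eq_zero] at h; rw [h] at hw; linarith
  have hwz : w - z ≠ 0 := sub_ne_zero.mpr (Ne.symm hzw)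
  simp only [ContinuousMap.mul_apply, ContinuousMap.smul_apply, ContinuousMap.sub_apply,
    phi_apply, smul_eq_mul]
  field_simp
  ring

lemma dense_span (c R : ℝ) (hc : 0 ≤ c) (hR : c + 1 ≤ R) (g : C(Set.Icc (-c) c, ℝ)) :
    g ∈ closure ((Submodule.span ℝ (genSet c R) : Submodule ℝ C(Set.Icc (-c) c, ℝ)) :
      Set C(Set.Icc (-c) c, ℝ)) := by
  set V : Submodule ℝ C(Set.Icc (-c) c, ℝ) := Submodule.span ℝ (genSet c R) with hV
  set W : Submodule ℝ C(Set.Icc (-c) c, ℝ) := V.topologicalClosure with hW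
  have hVW : ∀ u, u ∈ V → u ∈ W := fun u hu => Submodule.le_topologicalClosure V hu
  have hone : (1 : C(Set.Icc (-c) c, ℝ)) ∈ V :=
    Submodule.subset_span (Or.inl rfl)
  have hphiV : ∀ z (hz : c < |z|), R < |z| → phi c z hz ∈ V := fun z hz hz2 =>
    Submodule.subset_span (Or.inr ⟨z, hz, hz2, rfl⟩)
  -- pair products of phis lie in W
  have hpair : ∀ z w (hz : c < |z|) (hw : c < |w|), R < |z| → R < |w| →
      phi c z hz * phi c w hw ∈ W := by
    intro z w hz hw hz2 hw2
    by_cases hzw : z = w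
    · subst hzw
      -- limit argument
      have hz1 : c + 1 ≤ |z| := by linarith
      set wseq : ℕ → ℝ := fun n => if 0 ≤ z then z + 1/(n+1) else z - 1/(n+1) with hwseq
      have hwabs : ∀ n : ℕ, |wseq n| = |z| + 1/(n+1) := by
        intro n
        have hpos : (0:ℝ) < 1/(n+1) := by positivity
        by_cases h0 : 0 ≤ z
        · have hzpos : 0 < z := by rcases lt_or_eq_of_le h0 with h|h; exact h; rw [←h] at hz2; simp at hz2; linarith
          simp only [hwseq, if_pos h0]
          rw [abs_of_pos hzpos, abs_of_pos (by linarith)]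
        · push_neg at h0
          simp only [hwseq, if_neg (not_le.mpr h0)]
          rw [abs_of_neg h0, abs_of_neg (by linarith)]
          ring
      have hwgt : ∀ n : ℕ, R < |wseq n| := fun n => by
        have : (0:ℝ) < 1/(n+1) := by positivity
        rw [hwabs n]; linarith
      have hwc : ∀ n : ℕ, c < |wseq n| := fun n => by
        have := hwgt n; linarith
      have hwne : ∀ n : ℕ, z ≠ wseq n := by
        intro n h
        have := hwabs n
        rw [← h] at this
        have hpos : (0:ℝ) < 1/(n+1) := by positivity
        linarith
      have hmem : ∀ n : ℕ, phi c z hz * phi c (wseq n) (hwc n) ∈ V := by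
        intro n
        rw [phi_mul c z (wseq n) hz (hwc n) (hwne n)]
        exact Submodule.smul_mem V _ (Submodule.sub_mem V (hphiV z hz hz2) (hphiV (wseq n) (hwc n) (hwgt n)))
      -- convergence
      have hconv : Filter.Tendsto (fun n => phi c (wseq n) (hwc n)) Filter.atTop
          (nhds (phi c z hz)) := by
        rw [tendsto_iff_dist_tendsto_zero]
        apply squeeze_zero (fun n => dist_nonneg) (g := fun n : ℕ => 1/(n+1))
        · intro n
          rw [dist_eq_norm]
          have := phi_norm_sub c (wseq n) z hc (by linarith [hwgt n]) hz1
          have habs : |wseq n - z| = 1/(n+1) := by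
            have hpos : (0:ℝ) < 1/(n+1) := by positivity
            by_cases h0 : 0 ≤ z
            · simp only [hwseq, if_pos h0]; rw [add_sub_cancel_left, abs_of_pos hpos]
            · simp only [hwseq, if_neg h0]
              have : z - 1/((n:ℝ)+1) - z = -(1/((n:ℝ)+1)) := by ring
              rw [this, abs_neg, abs_of_pos hpos]
          rw [habs] at this
          exact this
        · exact tendsto_one_div_add_atTop_nhds_zero_nat
      have hconv2 : Filter.Tendsto (fun n => phi c z hz * phi c (wseq n) (hwc n)) Filter.atTop
          (nhds (phi c z hz * phi c z hz)) := Filter.Tendsto.mul tendsto_const_nhds hconv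
      have : phi c z hz * phi c z hz ∈ closure (V : Set C(Set.Icc (-c) c, ℝ)) :=
        mem_closure_of_tendsto hconv2 (Filter.Eventually.of_forall fun n => hmem n)
      rwa [← Submodule.topologicalClosure_coe] at this
    · rw [phi_mul c z w hz hw hzw]
      exact hVW _ (Submodule.smul_mem V _ (Submodule.sub_mem V (hphiV z hz hz2) (hphiV w hw hw2)))
  have hVV : ∀ a ∈ V, ∀ b ∈ V, a * b ∈ W := by
    intro a ha b hb
    refine Submodule.span_induction₂ (p := fun x y _ _ => x * y ∈ W)
      ?_ ?_ ?_ ?_ ?_ ?_ ?_ ha hb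
    · intro x y hx hy
      rcases hx with hx1 | ⟨z, hz, hz2, rfl⟩ <;> rcases hy with hy1 | ⟨w, hw, hw2, rfl⟩
      · rw [Set.mem_singleton_iff] at hx1 hy1; subst hx1; subst hy1
        rw [one_mul]; exact hVW _ hone
      · rw [Set.mem_singleton_iff] at hx1; subst hx1
        rw [one_mul]; exact hVW _ (hphiV w hw hw2)
      · rw [Set.mem_singleton_iff] at hy1; subst hy1
        rw [mul_one]; exact hVW _ (hphiV z hz hz2)
      · exact hpair z w hz hw hz2 hw2
    · intro y hy; rw [zero_mul]; exact W.zero_mem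
    · intro x hx; rw [mul_zero]; exact W.zero_mem
    · intro x y u hx hy hu h1 h2; rw [add_mul]; exact W.add_mem h1 h2
    · intro x y u hx hy hu h1 h2; rw [mul_add]; exact W.add_mem h1 h2
    · intro r x y hx hy h1; rw [smul_mul_assoc]; exact W.smul_mem r h1
    · intro r x y hx hy h1; rw [mul_smul_comm]; exact W.smul_mem r h1
  have hWmul : ∀ x y : C(Set.Icc (-c) c, ℝ), x ∈ W → y ∈ W → x * y ∈ W := by
    intro a b ha hb
    have ha' : a ∈ closure (V : Set C(Set.Icc (-c) c, ℝ)) := by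
      rwa [← Submodule.topologicalClosure_coe]
    have hb' : b ∈ closure (V : Set C(Set.Icc (-c) c, ℝ)) := by
      rwa [← Submodule.topologicalClosure_coe]
    obtain ⟨u, hu, hua⟩ := mem_closure_iff_seq_limit.mp ha'
    obtain ⟨v, hv, hvb⟩ := mem_closure_iff_seq_limit.mp hb'
    have htend : Filter.Tendsto (fun n => u n * v n) Filter.atTop (nhds (a * b)) :=
      Filter.Tendsto.mul hua hvb
    have hcl : IsClosed (W : Set C(Set.Icc (-c) c, ℝ)) := Submodule.isClosed_topologicalClosure V
    exact hcl.mem_of_tendsto htend (Filter.Eventually.of_forall fun n => hVV _ (hu n) _ (hv n))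
  let A : Subalgebra ℝ C(Set.Icc (-c) c, ℝ) := Submodule.toSubalgebra W (hVW _ hone) hWmul
  have hsep : A.SeparatesPoints := by
    intro y1 y2 hne
    have hzc : c < |R + 1| := by rw [abs_of_pos (by linarith)]; linarith
    have hzR : R < |R + 1| := by rw [abs_of_pos (by linarith)]; linarith
    refine ⟨_, ⟨phi c (R+1) hzc, hVW _ (hphiV (R+1) hzc hzR), rfl⟩, ?_⟩
    simp only [phi_apply]
    intro heq
    apply hne
    have h2 := inv_injective heq
    have : (y1 : ℝ) = (y2 : ℝ) := by linarith [h2, sub_right_injective h2]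
    exact Subtype.ext this
  have htop := ContinuousMap.subalgebra_topologicalClosure_eq_top_of_separatesPoints A hsep
  have hg : g ∈ A.topologicalClosure := by rw [htop]; trivial
  have hcoe : (A.topologicalClosure : Set C(Set.Icc (-c) c, ℝ))
      = closure (A : Set C(Set.Icc (-c) c, ℝ)) := Subalgebra.topologicalClosure_coe A
  have hg2 : g ∈ closure (A : Set C(Set.Icc (-c) c, ℝ)) := by rw [← hcoe]; exact hg
  have hAW : (A : Set C(Set.Icc (-c) c, ℝ)) = closure (V : Set C(Set.Icc (-c) c, ℝ)) := by
    rw [show (A : Set C(Set.Icc (-c) c, ℝ)) = (W : Set C(Set.Icc (-c) c, ℝ)) from rfl]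
    exact Submodule.topologicalClosure_coe V
  rw [hAW, closure_closure] at hg2
  exact hg2

open MeasureTheory Polynomial in
/-- Balanced measure as Ruelle eigenmeasure: a compactly supported probability
measure `σ` on ℝ (supported on the real Julia set of `T`, where all preimages
are real) satisfies the Stieltjes-transform identity
`∫ (T'(z)/d)/(T(z) − x) dσ(x) = ∫ 1/(z − x) dσ(x)` near infinity if and only if
`σ` is invariant under the dual Ruelle operator:
`∫ (1/d) Σ_{T(y)=x} f(y) dσ(x) = ∫ f dσ` for every continuous `f`. -/
theorem stmt_17 (T : Polynomial ℝ) (d : ℕ) (hd : d = T.natDegree) (h2 : 2 ≤ d)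
    (σ : Measure ℝ) [IsProbabilityMeasure σ]
    (K : Set ℝ) (hK : IsCompact K) (hKfull : σ Kᶜ = 0)
    (hreal : ∀ x ∈ K, Multiset.card (T - Polynomial.C x).roots = d) :
    (∃ R : ℝ, ∀ z : ℝ, R < |z| →
        ∫ x, (T.derivative.eval z / d) / (T.eval z - x) ∂σ = ∫ x, 1 / (z - x) ∂σ)
    ↔ (∀ f : ℝ → ℝ, Continuous f →
        ∫ x, (1 / d : ℝ) * (((T - Polynomial.C x).roots.map f).sum) ∂σ = ∫ x, f x ∂σ) := by
  -- setup
  obtain ⟨M, hM⟩ := hK.isBounded.subset_closedBall 0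
  set M1 : ℝ := max M 0 with hM1
  have hKM : ∀ x ∈ K, |x| ≤ M1 := by
    intro x hx
    have := hM hx
    simp only [Metric.mem_closedBall, Real.dist_eq, sub_zero] at this
    exact le_trans this (le_max_left _ _)
  have h2' : 2 ≤ T.natDegree := hd ▸ h2
  obtain ⟨B, hB0, hB⟩ := aux_bound T h2' M1
  set c : ℝ := max M1 B with hc
  have hc0 : 0 < c := lt_of_lt_of_le hB0 (le_max_right _ _)
  have hcc : -c ≤ c := by linarith
  have hKc : ∀ x ∈ K, |x| ≤ c := fun x hx => le_trans (hKM x hx) (le_max_left _ _)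
  have hTlarge : ∀ z : ℝ, c < |z| → M1 < |Polynomial.eval z T| :=
    fun z hz => hB z (lt_of_le_of_lt (le_max_right M1 B) hz)
  have hTne : ∀ x ∈ K, ∀ z : ℝ, c < |z| → Polynomial.eval z T ≠ x := by
    intro x hx z hz h
    have h1 := hTlarge z hz
    rw [h] at h1
    exact absurd (hKM x hx) (not_le.mpr h1)
  have hT0 : ∀ x : ℝ, T - Polynomial.C x ≠ 0 := by
    intro x h
    have h1 : (T - Polynomial.C x).natDegree = T.natDegree := Polynomial.natDegree_sub_C
    rw [h] at h1
    simp at h1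
    omega
  have hrootbound : ∀ x ∈ K, ∀ y ∈ (T - Polynomial.C x).roots, |y| ≤ c := by
    intro x hx y hy
    by_contra hlt
    push_neg at hlt
    rw [Polynomial.mem_roots (hT0 x)] at hy
    have hev : Polynomial.eval y T = x := by
      have := hy
      simp only [Polynomial.IsRoot, Polynomial.eval_sub, Polynomial.eval_C] at this
      linarith
    have := hTlarge y hlt
    rw [hev] at this
    exact absurd (hKM x hx) (not_le.mpr this)
  have hker : ∀ x ∈ K, ∀ z : ℝ, c < |z| →
      (Polynomial.eval z (Polynomial.derivative T) / d) / (Polynomial.eval z T - x)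
        = (1 / d : ℝ) * (((T - Polynomial.C x).roots.map (fun y => 1 / (z - y))).sum) := by
    intro x hx z hz
    apply aux_kernel T d hd h2 x z (hreal x hx)
    · intro a ha h
      rw [h] at hz
      exact absurd (hrootbound x hx a ha) (not_le.mpr hz)
    · exact hTne x hx z hz
  have hae : ∀ᵐ x ∂σ, x ∈ K := by
    rw [MeasureTheory.ae_iff]
    exact hKfull
  have hrestrict : σ.restrict K = σ := MeasureTheory.Measure.restrict_eq_self_of_ae_mem hae
  have hd0 : (d : ℝ) ≠ 0 := by positivity
  constructor
  · -- hard direction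
    rintro ⟨R, hR⟩ f hf
    set R0 : ℝ := max R (c+1) with hR0def
    have hR0R : R ≤ R0 := le_max_left _ _
    have hR0c : c + 1 ≤ R0 := le_max_right _ _
    set proj : ℝ → Set.Icc (-c) c := Set.projIcc (-c) c hcc with hproj
    have hprojmem : ∀ y : ℝ, y ∈ Set.Icc (-c) c → ((proj y : ℝ)) = y := by
      intro y hy
      rw [hproj, Set.projIcc_of_mem hcc hy]
    set g : C(Set.Icc (-c) c, ℝ) := ⟨fun y => f y, hf.comp continuous_subtype_val⟩ with hgdef
    set Sfun : C(Set.Icc (-c) c, ℝ) → ℝ → ℝ := fun h x =>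
      (1/d : ℝ) * (((T - Polynomial.C x).roots.map (fun y => h (proj y))).sum) with hSfun
    have hint : ∀ G : ℝ → ℝ, ContinuousOn G K → MeasureTheory.Integrable G σ := by
      intro G hG
      have h1 : MeasureTheory.IntegrableOn G K σ := hG.integrableOn_compact hK
      rwa [MeasureTheory.IntegrableOn, hrestrict] at h1
    have hproj_int : ∀ h : C(Set.Icc (-c) c, ℝ),
        MeasureTheory.Integrable (fun x => h (proj x)) σ := by
      intro h
      apply hint
      exact (h.continuous.comp continuous_projIcc).continuousOn
    have hbound : ∀ h1 h2 : C(Set.Icc (-c) c, ℝ), ∀ x ∈ K,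
        |Sfun h1 x - Sfun h2 x| ≤ ‖h1 - h2‖ := by
      intro h1 h2 x hx
      have hcount := hreal x hx
      have e1 : Sfun h1 x - Sfun h2 x
          = (1/d : ℝ) * (((T - Polynomial.C x).roots.map (fun y => (h1 - h2) (proj y))).sum) := by
        simp only [hSfun]
        rw [← mul_sub]
        congr 1
        rw [← Multiset.sum_map_sub]
        apply congrArg Multiset.sum
        apply Multiset.map_congr rfl
        intro y hy
        simp
      rw [e1, abs_mul]
      have h3 : |(((T - Polynomial.C x).roots.map (fun y => (h1 - h2) (proj y))).sum)|
          ≤ d * ‖h1 - h2‖ := by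
        have step1 := Multiset.abs_sum_le_sum_abs
          (s := ((T - Polynomial.C x).roots.map (fun y => (h1 - h2) (proj y))))
        rw [Multiset.map_map] at step1
        have step2 : (((T - Polynomial.C x).roots.map
            (abs ∘ fun y => (h1 - h2) (proj y)))).sum
            ≤ Multiset.card ((T - Polynomial.C x).roots.map
                (abs ∘ fun y => (h1 - h2) (proj y))) • ‖h1 - h2‖ := by
          apply Multiset.sum_le_card_nsmul
          intro a ha
          obtain ⟨y, hy, rfl⟩ := Multiset.mem_map.mp ha
          have := ContinuousMap.norm_coe_le_norm (h1 - h2) (proj y)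
          rwa [Real.norm_eq_abs] at this
        rw [Multiset.card_map, hcount, nsmul_eq_mul] at step2
        exact le_trans step1 step2
      have habs : |(1/d : ℝ)| = 1/d := abs_of_pos (by positivity)
      rw [habs]
      calc (1/d : ℝ) * |(((T - Polynomial.C x).roots.map (fun y => (h1 - h2) (proj y))).sum)|
          ≤ (1/d : ℝ) * (d * ‖h1 - h2‖) := by
            apply mul_le_mul_of_nonneg_left h3 (by positivity)
        _ = ‖h1 - h2‖ := by field_simp
    have hwitness : ∀ h, h ∈ Submodule.span ℝ (genSet c R0) → ∃ G : ℝ → ℝ,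
        ContinuousOn G K ∧ (∀ x ∈ K, Sfun h x = G x) ∧
        ∫ x, G x ∂σ = ∫ x, h (proj x) ∂σ := by
      intro h hh
      induction hh using Submodule.span_induction with
      | mem v hv =>
        rcases hv with hv1 | ⟨z, hz, hz2, rfl⟩
        · rw [Set.mem_singleton_iff] at hv1
          subst hv1
          refine ⟨fun _ => 1, continuousOn_const, ?_, by simp⟩
          intro x hx
          simp only [hSfun, ContinuousMap.one_apply]
          rw [Multiset.map_const', Multiset.sum_replicate, hreal x hx, nsmul_eq_mul, mul_one]
          field_simp
        · have hzR : R < |z| := lt_of_le_of_lt hR0R hz2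
          have hzc : c < |z| := hz
          refine ⟨fun x => (T.derivative.eval z / d) / (T.eval z - x), ?_, ?_, ?_⟩
          · apply ContinuousOn.div continuousOn_const
              (continuousOn_const.sub continuousOn_id)
            intro x hx
            exact sub_ne_zero.mpr (hTne x hx z hzc)
          · intro x hx
            rw [hSfun]
            simp only
            have : ((T - Polynomial.C x).roots.map (fun y => (phi c z hz) (proj y)))
                = ((T - Polynomial.C x).roots.map (fun y => 1 / (z - y))) := by
              apply Multiset.map_congr rfl
              intro y hy
              have hymem : y ∈ Set.Icc (-c) c := by
                have := hrootbound x hx y hy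
                exact ⟨by linarith [(abs_le.mp this).1], (abs_le.mp this).2⟩
              rw [phi_apply, hproj, Set.projIcc_of_mem hcc hymem, one_div]
            rw [this]
            exact (hker x hx z hzc).symm
          · have h1 := hR z hzR
            rw [h1]
            apply MeasureTheory.integral_congr_ae
            filter_upwards [hae] with x hx
            have hxmem : x ∈ Set.Icc (-c) c := by
              have := hKc x hx
              exact ⟨by linarith [(abs_le.mp this).1], (abs_le.mp this).2⟩
            rw [phi_apply, hproj, Set.projIcc_of_mem hcc hxmem, one_div]
      | zero =>
        refine ⟨fun _ => 0, continuousOn_const, ?_, by simp⟩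
        intro x hx
        simp [hSfun]
      | add v w hv hw ihv ihw =>
        obtain ⟨G1, hG1c, hG1e, hG1i⟩ := ihv
        obtain ⟨G2, hG2c, hG2e, hG2i⟩ := ihw
        refine ⟨fun x => G1 x + G2 x, hG1c.add hG2c, ?_, ?_⟩
        · intro x hx
          have e : Sfun (v + w) x = Sfun v x + Sfun w x := by
            simp only [hSfun, ContinuousMap.add_apply]
            rw [Multiset.sum_map_add]
            ring
          rw [e, hG1e x hx, hG2e x hx]
        · rw [MeasureTheory.integral_add (hint G1 hG1c) (hint G2 hG2c), hG1i, hG2i]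
          rw [← MeasureTheory.integral_add (hproj_int v) (hproj_int w)]
          apply MeasureTheory.integral_congr_ae
          filter_upwards with x
          simp
      | smul a v hv ihv =>
        obtain ⟨G1, hG1c, hG1e, hG1i⟩ := ihv
        refine ⟨fun x => a * G1 x, continuousOn_const.mul hG1c, ?_, ?_⟩
        · intro x hx
          have e : Sfun (a • v) x = a * Sfun v x := by
            simp only [hSfun, ContinuousMap.smul_apply, smul_eq_mul]
            rw [Multiset.sum_map_mul_left]
            ring
          rw [e, hG1e x hx]
        · have e1 : ∫ x, a * G1 x ∂σ = a * ∫ x, G1 x ∂σ :=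
            MeasureTheory.integral_const_mul a G1
          rw [e1, hG1i]
          have e2 : ∫ x, (a • v) (proj x) ∂σ = a * ∫ x, v (proj x) ∂σ := by
            rw [← MeasureTheory.integral_const_mul]
            apply MeasureTheory.integral_congr_ae
            filter_upwards with x
            simp
          rw [e2]
    have hgmem := dense_span c R0 (le_of_lt hc0) hR0c g
    obtain ⟨u, hu, huconv⟩ := mem_closure_iff_seq_limit.mp hgmem
    have hnorm0 : Filter.Tendsto (fun n => ‖u n - g‖) Filter.atTop (nhds 0) := by
      rw [tendsto_iff_dist_tendsto_zero] at huconv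
      simpa [dist_eq_norm] using huconv
    choose Gseq hGc hGe hGi using fun n => hwitness (u n) (hu n)
    have htu : TendstoUniformlyOn (fun n x => Gseq n x) (Sfun g) Filter.atTop K := by
      rw [Metric.tendstoUniformlyOn_iff]
      intro ε hε
      filter_upwards [hnorm0.eventually (gt_mem_nhds hε)] with n hn x hx
      rw [Real.dist_eq, ← hGe n x hx]
      calc |Sfun g x - Sfun (u n) x| ≤ ‖g - u n‖ := hbound g (u n) x hx
        _ = ‖u n - g‖ := norm_sub_rev _ _
        _ < ε := hn
    have hSgK : ContinuousOn (Sfun g) K :=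
      htu.continuousOn (Filter.Eventually.of_forall fun n => (hGc n)).frequently
    have hSgInt : MeasureTheory.Integrable (Sfun g) σ := hint _ hSgK
    have hkey : ∀ n, |(∫ x, Sfun g x ∂σ) - ∫ x, g (proj x) ∂σ| ≤ 2 * ‖u n - g‖ := by
      intro n
      have hGn_int : MeasureTheory.Integrable (Gseq n) σ := hint _ (hGc n)
      have e1 : |(∫ x, Sfun g x ∂σ) - ∫ x, Gseq n x ∂σ| ≤ ‖u n - g‖ := by
        rw [← MeasureTheory.integral_sub hSgInt hGn_int]
        have hb : ∀ᵐ x ∂σ, ‖Sfun g x - Gseq n x‖ ≤ ‖u n - g‖ := by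
          filter_upwards [hae] with x hx
          rw [Real.norm_eq_abs, ← hGe n x hx]
          calc |Sfun g x - Sfun (u n) x| ≤ ‖g - u n‖ := hbound g (u n) x hx
            _ = ‖u n - g‖ := norm_sub_rev _ _
        have := MeasureTheory.norm_integral_le_of_norm_le_const (μ := σ) hb
        simpa [measure_univ] using this
      have e2 : |(∫ x, Gseq n x ∂σ) - ∫ x, g (proj x) ∂σ| ≤ ‖u n - g‖ := by
        rw [hGi n, ← MeasureTheory.integral_sub (hproj_int (u n)) (hproj_int g)]
        have hb : ∀ᵐ x ∂σ, ‖(u n) (proj x) - g (proj x)‖ ≤ ‖u n - g‖ := by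
          filter_upwards with x
          have := ContinuousMap.norm_coe_le_norm (u n - g) (proj x)
          simpa using this
        have := MeasureTheory.norm_integral_le_of_norm_le_const (μ := σ) hb
        simpa [measure_univ] using this
      calc |(∫ x, Sfun g x ∂σ) - ∫ x, g (proj x) ∂σ|
          ≤ |(∫ x, Sfun g x ∂σ) - ∫ x, Gseq n x ∂σ|
            + |(∫ x, Gseq n x ∂σ) - ∫ x, g (proj x) ∂σ| := abs_sub_le _ _ _
        _ ≤ 2 * ‖u n - g‖ := by linarith
    have hABeq : ∫ x, Sfun g x ∂σ = ∫ x, g (proj x) ∂σ := by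
      have h0 : Filter.Tendsto (fun n => 2 * ‖u n - g‖) Filter.atTop (nhds 0) := by
        simpa using hnorm0.const_mul 2
      have hle := ge_of_tendsto h0 (Filter.Eventually.of_forall hkey)
      have := abs_nonneg ((∫ x, Sfun g x ∂σ) - ∫ x, g (proj x) ∂σ)
      have habs0 : |(∫ x, Sfun g x ∂σ) - ∫ x, g (proj x) ∂σ| = 0 := le_antisymm hle this
      have := abs_eq_zero.mp habs0
      linarith
    have efinal1 : ∫ x, (1/d : ℝ) * (((T - Polynomial.C x).roots.map f).sum) ∂σ
        = ∫ x, Sfun g x ∂σ := by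
      apply MeasureTheory.integral_congr_ae
      filter_upwards [hae] with x hx
      simp only [hSfun]
      congr 1
      apply congrArg Multiset.sum
      apply Multiset.map_congr rfl
      intro y hy
      have hymem : y ∈ Set.Icc (-c) c := by
        have := hrootbound x hx y hy
        exact ⟨by linarith [(abs_le.mp this).1], (abs_le.mp this).2⟩
      have : ((proj y : ℝ)) = y := hprojmem y hymem
      rw [hgdef]
      simp only [ContinuousMap.coe_mk]
      rw [this]
    have efinal2 : ∫ x, g (proj x) ∂σ = ∫ x, f x ∂σ := by
      apply MeasureTheory.integral_congr_ae
      filter_upwards [hae] with x hx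
      have hxmem : x ∈ Set.Icc (-c) c := by
        have := hKc x hx
        exact ⟨by linarith [(abs_le.mp this).1], (abs_le.mp this).2⟩
      rw [hgdef]
      simp only [ContinuousMap.coe_mk]
      rw [hprojmem x hxmem]
    rw [efinal1, hABeq, efinal2]
  · -- easy direction
    intro h
    refine ⟨c, fun z hz => ?_⟩
    set f : ℝ → ℝ := fun y => 1 / (z - (Set.projIcc (-c) c hcc y : ℝ)) with hf
    have hfc : Continuous f := by
      rw [hf]
      simp only [one_div]
      apply Continuous.inv₀
      · exact continuous_const.sub (continuous_subtype_val.comp (continuous_projIcc))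
      · intro y
        have hy : |(Set.projIcc (-c) c hcc y : ℝ)| ≤ c :=
          abs_le.mpr ⟨(Set.projIcc (-c) c hcc y).2.1, (Set.projIcc (-c) c hcc y).2.2⟩
        intro hzero
        rw [sub_eq_zero] at hzero
        rw [hzero] at hz
        linarith
    have key := h f hfc
    have e1 : ∫ x, (1 / d : ℝ) * (((T - Polynomial.C x).roots.map f).sum) ∂σ
        = ∫ x, (T.derivative.eval z / d) / (T.eval z - x) ∂σ := by
      apply MeasureTheory.integral_congr_ae
      filter_upwards [hae] with x hx
      rw [hker x hx z hz]
      congr 1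
      apply congrArg Multiset.sum
      apply Multiset.map_congr rfl
      intro y hy
      have hymem : y ∈ Set.Icc (-c) c := by
        have := hrootbound x hx y hy
        exact ⟨by linarith [abs_le.mp this |>.1], (abs_le.mp this).2⟩
      rw [hf]
      simp only [Set.projIcc_of_mem hcc hymem]
    have e2 : ∫ x, f x ∂σ = ∫ x, 1 / (z - x) ∂σ := by
      apply MeasureTheory.integral_congr_ae
      filter_upwards [hae] with x hx
      have hxmem : x ∈ Set.Icc (-c) c := by
        have := hKc x hx
        exact ⟨by linarith [(abs_le.mp this).1], (abs_le.mp this).2⟩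
      rw [hf]
      simp only [Set.projIcc_of_mem hcc hxmem]
    rw [← e1, ← e2, key]
end
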